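/- Let T be an associative trialgebra over a field K of characteristic zero. Then the set of central derivations of T equals the intersection of the centroid with the derivation algebra: C(T) = Γ(T) ∩ Der(T). -/

import Mathlib

variable {K T : Type*} [Field K] [CharZero K] [AddCommGroup T] [Module K T]

/-- An associative trialgebra structure: three bilinear products `l` (⊣), `r` (⊢), `m` (⊥)
satisfying the eleven trialgebra axioms. -/
structure IsTrialgebra (l r m : T →ₗ[K] T →ₗ[K] T) : Prop where
  ax1 : ∀ x y z : T, l (l x y) z = l x (l y z)
  ax2 : ∀ x y z : T, l (l x y) z = l x (r y z)
  ax3 : ∀ x y z : T, l (r x y) z = r x (l y z)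
  ax4 : ∀ x y z : T, r (l x y) z = r x (r y z)
  ax5 : ∀ x y z : T, r (r x y) z = r x (r y z)
  ax6 : ∀ x y z : T, l (l x y) z = l x (m y z)
  ax7 : ∀ x y z : T, l (m x y) z = m x (l y z)
  ax8 : ∀ x y z : T, m (l x y) z = m x (r y z)
  ax9 : ∀ x y z : T, m (r x y) z = r x (m y z)
  ax10 : ∀ x y z : T, r (m x y) z = r x (r y z)
  ax11 : ∀ x y z : T, m (m x y) z = m x (m y z)

/-- A derivation of the trialgebra: the Leibniz rule holds for each of the three products. -/
def IsDeriv (l r m : T →ₗ[K] T →ₗ[K] T) (d : T →ₗ[K] T) : Prop :=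
  ∀ x y : T,
    d (l x y) = l (d x) y + l x (d y) ∧
    d (r x y) = r (d x) y + r x (d y) ∧
    d (m x y) = m (d x) y + m x (d y)

/-- An element of the centroid of the trialgebra. -/
def IsCentroidElem (l r m : T →ₗ[K] T →ₗ[K] T) (ψ : T →ₗ[K] T) : Prop :=
  ∀ x y : T,
    (ψ (l x y) = l (ψ x) y ∧ ψ (l x y) = l x (ψ y)) ∧
    (ψ (r x y) = r (ψ x) y ∧ ψ (r x y) = r x (ψ y)) ∧
    (ψ (m x y) = m (ψ x) y ∧ ψ (m x y) = m x (ψ y))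

/-- Membership in the center Z(T) of the trialgebra. -/
def InCenter (l r m : T →ₗ[K] T →ₗ[K] T) (x : T) : Prop :=
  ∀ y : T, (l x y = 0 ∧ l y x = 0) ∧ (r x y = 0 ∧ r y x = 0) ∧ (m x y = 0 ∧ m y x = 0)

/-- A central derivation: a linear map with image in the center which kills all products. -/
def IsCentralDeriv (l r m : T →ₗ[K] T →ₗ[K] T) (ψ : T →ₗ[K] T) : Prop :=
  (∀ x : T, InCenter l r m (ψ x)) ∧
  ∀ x y : T, ψ (l x y) = 0 ∧ ψ (r x y) = 0 ∧ ψ (m x y) = 0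

/-- The set of central derivations of an associative trialgebra equals the intersection
of the centroid with the set of derivations: C(T) = Γ(T) ∩ Der(T). -/
theorem statement7 (l r m : T →ₗ[K] T →ₗ[K] T) (h : IsTrialgebra l r m) :
    {ψ : T →ₗ[K] T | IsCentralDeriv l r m ψ} =
      {ψ : T →ₗ[K] T | IsCentroidElem l r m ψ} ∩ {ψ : T →ₗ[K] T | IsDeriv l r m ψ} := by
  ext ψ
  simp only [Set.mem_setOf_eq, Set.mem_inter_iff]
  constructor
  · rintro ⟨hc, hz⟩
    constructor
    · intro x y
      obtain ⟨hl, hr, hm⟩ := hz x y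
      exact ⟨⟨hl.trans ((hc x y).1.1.symm), hl.trans ((hc y x).1.2.symm)⟩,
        ⟨hr.trans ((hc x y).2.1.1.symm), hr.trans ((hc y x).2.1.2.symm)⟩,
        ⟨hm.trans ((hc x y).2.2.1.symm), hm.trans ((hc y x).2.2.2.symm)⟩⟩
    · intro x y
      obtain ⟨hl, hr, hm⟩ := hz x y
      refine ⟨?_, ?_, ?_⟩
      · rw [hl, (hc x y).1.1, (hc y x).1.2, add_zero]
      · rw [hr, (hc x y).2.1.1, (hc y x).2.1.2, add_zero]
      · rw [hm, (hc x y).2.2.1, (hc y x).2.2.2, add_zero]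
  · rintro ⟨hc, hd⟩
    have key : ∀ x y : T, (l (ψ x) y = 0 ∧ l x (ψ y) = 0) ∧
        (r (ψ x) y = 0 ∧ r x (ψ y) = 0) ∧ (m (ψ x) y = 0 ∧ m x (ψ y) = 0) := by
      intro x y
      obtain ⟨⟨cl1, cl2⟩, ⟨cr1, cr2⟩, ⟨cm1, cm2⟩⟩ := hc x y
      obtain ⟨dl, dr, dm⟩ := hd x y
      refine ⟨⟨?_, ?_⟩, ⟨?_, ?_⟩, ⟨?_, ?_⟩⟩
      · have := (dl.symm.trans cl2); exact (add_eq_right).mp this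
      · have := (dl.symm.trans cl1); exact (add_eq_left).mp this
      · have := (dr.symm.trans cr2); exact (add_eq_right).mp this
      · have := (dr.symm.trans cr1); exact (add_eq_left).mp this
      · have := (dm.symm.trans cm2); exact (add_eq_right).mp this
      · have := (dm.symm.trans cm1); exact (add_eq_left).mp this
    constructor
    · intro x y
      exact ⟨⟨(key x y).1.1, (key y x).1.2⟩, ⟨(key x y).2.1.1, (key y x).2.1.2⟩,
        ⟨(key x y).2.2.1, (key y x).2.2.2⟩⟩
    · intro x y
      exact ⟨((hc x y).1.1).trans (key x y).1.1,
        ((hc x y).2.1.1).trans (key x y).2.1.1,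
        ((hc x y).2.2.1).trans (key x y).2.2.1⟩
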